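/- Suppose additionally y ∈ A and λ ∈ F satisfy hy − yh = λy. Then for every a ∈ F and every s ∈ ℕ, y^s · u_a = u_{a+sλ} · Σ_{ℓ≥0} d^{(ℓ)}(y^s) · h_{1−a}^{⟨ℓ⟩} · t^ℓ in A[[t]]. (This is identity (3.10) of the paper's Lemma 3.3, proved there for y = D_K(x^α) ∈ U(𝐊) with λ = α_k − α_{−k}; only the stated commutation relations are used.) -/

import Mathlib

/-- Falling factorial `x_a^{[m]} := (x+a)(x+a-1)⋯(x+a-m+1)` in an `F`-algebra `A`. -/
def fallPow {F A : Type*} [Field F] [Ring A] [Algebra F A] (x : A) (a : F) : ℕ → A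
  | 0 => 1
  | m + 1 => fallPow x a m * (x + algebraMap F A (a - (m : F)))

/-- Rising factorial `x_a^{⟨m⟩} := (x+a)(x+a+1)⋯(x+a+m-1)` in an `F`-algebra `A`. -/
def risePow {F A : Type*} [Field F] [Ring A] [Algebra F A] (x : A) (a : F) : ℕ → A
  | 0 => 1
  | m + 1 => risePow x a m * (x + algebraMap F A (a + (m : F)))

/-- `u_a = Σ_{r≥0} ((−1)^r/r!) h_{−a}^{[r]} e^r t^r ∈ A[[t]]`. -/
noncomputable def uSer {F A : Type*} [Field F] [Ring A] [Algebra F A] (h e : A) (a : F) :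
    PowerSeries A :=
  PowerSeries.mk fun r => ((-1 : F) ^ r / (r.factorial : F)) • (fallPow h (-a) r * e ^ r)

/-- The divided power `d^{(ℓ)} = (1/ℓ!)(ad e)^ℓ` of the inner derivation `ad e`. -/
def dPow (F : Type*) {A : Type*} [Field F] [Ring A] [Algebra F A]
    (e : A) (ℓ : ℕ) (x : A) : A :=
  ((ℓ.factorial : F))⁻¹ • ((fun z => e * z - z * e)^[ℓ] x)


section helpers
set_option linter.unusedSectionVars false
variable {F A : Type*} [Field F] [Ring A] [Algebra F A]

lemma commute_add_C (x : A) (d c : F) :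
    Commute (x + algebraMap F A d) (x + algebraMap F A c) := by
  have h1 : Commute x (algebraMap F A c) := (Algebra.commutes c x).symm
  exact (((Commute.refl x).add_right h1)).add_left (Algebra.commutes d (x + algebraMap F A c))

lemma risePow_succ (x : A) (c : F) (ℓ : ℕ) :
    risePow x c (ℓ+1) = risePow x c ℓ * (x + algebraMap F A (c + ℓ)) := rfl

lemma risePow_succ_left (x : A) (c : F) :
    ∀ ℓ, risePow x c (ℓ+1) = (x + algebraMap F A c) * risePow x (c+1) ℓ
  | 0 => by simp [risePow]
  | (ℓ+1) => by
    have hc : (c + ((ℓ+1 : ℕ) : F)) = ((c+1) + (ℓ:F)) := by push_cast; ring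
    rw [risePow_succ, hc, risePow_succ_left x c ℓ, risePow_succ, mul_assoc]

lemma commute_risePow (x : A) (d c : F) :
    ∀ ℓ, Commute (x + algebraMap F A d) (risePow x c ℓ)
  | 0 => Commute.one_right _
  | (ℓ+1) => (commute_risePow x d c ℓ).mul_right (commute_add_C x d (c+ℓ))

lemma weight_move {h w : A} {c : F} (hw : h * w - w * h = c • w) (d : F) :
    (h + algebraMap F A d) * w = w * (h + algebraMap F A (d + c)) := by
  have h1 : h * w = c • w + w * h := sub_eq_iff_eq_add.mp hw
  rw [map_add, add_mul, mul_add, mul_add, h1, Algebra.smul_def,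
    ← Algebra.commutes d w, ← Algebra.commutes c w]
  abel


variable {h e : A}

lemma he_move (he : h * e - e * h = e) (d : F) :
    (h + algebraMap F A d) * e = e * (h + algebraMap F A (d + 1)) :=
  weight_move (c := 1) (by rw [one_smul]; exact he) d

lemma pow_move (he : h * e - e * h = e) :
    ∀ (d : F) (k : ℕ), (h + algebraMap F A d) * e ^ k = e ^ k * (h + algebraMap F A (d + k))
  | d, 0 => by simp
  | d, (k+1) => by
    have hc : (d + ((k+1 : ℕ) : F)) = (d + 1) + (k : F) := by push_cast; ring
    rw [hc, pow_succ', ← mul_assoc, he_move he d, mul_assoc, pow_move he (d+1) k, ← mul_assoc]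

lemma risePow_mul_e (he : h * e - e * h = e) (c : F) :
    ∀ ℓ, risePow h c ℓ * e = e * risePow h (c+1) ℓ
  | 0 => by simp [risePow]
  | (ℓ+1) => by
    have hc : (c + (ℓ:F)) + 1 = (c + 1) + (ℓ:F) := by ring
    rw [risePow_succ, mul_assoc, he_move he, hc, ← mul_assoc, risePow_mul_e he c ℓ,
      mul_assoc, ← risePow_succ]

lemma weight_D {x : A} {c : F} (he : h * e - e * h = e) (hx : h * x - x * h = c • x) :
    h * (e * x - x * e) - (e * x - x * e) * h = (c + 1) • (e * x - x * e) := by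
  have he' : h * e = e + e * h := sub_eq_iff_eq_add.mp he
  have hx' : h * x = c • x + x * h := sub_eq_iff_eq_add.mp hx
  have h1 : h * (e * x) = e * x + c • (e * x) + e * x * h := by
    calc h * (e * x) = (h * e) * x := (mul_assoc _ _ _).symm
      _ = e * x + e * (h * x) := by rw [he', add_mul, mul_assoc]
      _ = e * x + e * (c • x + x * h) := by rw [hx']
      _ = e * x + c • (e * x) + e * x * h := by
          rw [mul_add, mul_smul_comm, ← mul_assoc, ← add_assoc]
  have h2 : h * (x * e) = c • (x * e) + (x * e + x * e * h) := by
    calc h * (x * e) = (h * x) * e := (mul_assoc _ _ _).symm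
      _ = c • (x * e) + x * (h * e) := by rw [hx', add_mul, smul_mul_assoc, mul_assoc]
      _ = c • (x * e) + (x * e + x * e * h) := by rw [he', mul_add, ← mul_assoc]
  rw [mul_sub, sub_mul, h1, h2, smul_sub, add_smul, one_smul, add_smul, one_smul]
  abel

lemma weight_iter (he : h * e - e * h = e) {z : A} {μ : F} (hz : h * z - z * h = μ • z) :
    ∀ ℓ : ℕ, h * ((fun x => e * x - x * e)^[ℓ] z) - ((fun x => e * x - x * e)^[ℓ] z) * h
      = (μ + ℓ) • ((fun x => e * x - x * e)^[ℓ] z)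
  | 0 => by simpa using hz
  | (ℓ+1) => by
    have ih := weight_iter he hz ℓ
    have := weight_D he ih
    rw [Function.iterate_succ_apply']
    have hc : (μ + (ℓ:F)) + 1 = μ + ((ℓ+1 : ℕ) : F) := by push_cast; ring
    simpa [hc] using this


variable [CharZero F]

lemma weight_dPow (he : h * e - e * h = e) {z : A} {μ : F} (hz : h * z - z * h = μ • z)
    (ℓ : ℕ) : h * dPow F e ℓ z - dPow F e ℓ z * h = (μ + ℓ) • dPow F e ℓ z := by
  unfold dPow
  rw [mul_smul_comm, smul_mul_assoc, ← smul_sub, weight_iter he hz ℓ, smul_comm]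

lemma e_dPow (ℓ : ℕ) (z : A) :
    e * dPow F e ℓ z - dPow F e ℓ z * e = ((ℓ:F)+1) • dPow F e (ℓ+1) z := by
  unfold dPow
  rw [Function.iterate_succ_apply']
  rw [mul_smul_comm, smul_mul_assoc, ← smul_sub, smul_smul]
  show _ = (((ℓ:F)+1) * ((ℓ+1).factorial : F)⁻¹) • (e * ((fun z => e * z - z * e)^[ℓ] z)
    - ((fun z => e * z - z * e)^[ℓ] z) * e)
  congr 1
  have h1 : ((ℓ.factorial : F)) ≠ 0 := Nat.cast_ne_zero.mpr (Nat.factorial_ne_zero ℓ)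
  have h2 : ((ℓ:F)+1) ≠ 0 := Nat.cast_add_one_ne_zero ℓ
  rw [Nat.factorial_succ]
  push_cast
  field_simp

lemma weight_pow {y : A} {lam : F} (hy : h * y - y * h = lam • y) :
    ∀ s : ℕ, h * y ^ s - y ^ s * h = ((s : F) * lam) • y ^ s
  | 0 => by simp
  | (s+1) => by
    have ih := weight_pow hy s
    have expand : h * (y * y ^ s) - (y * y ^ s) * h
        = (h * y - y * h) * y ^ s + y * (h * y ^ s - y ^ s * h) := by noncomm_ring
    rw [pow_succ', expand, hy, ih, smul_mul_assoc, mul_smul_comm, ← pow_succ']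
    rw [← add_smul]
    congr 1
    push_cast; ring

lemma star (he : h * e - e * h = e) {z : A} {μ : F} (hz : h * z - z * h = μ • z)
    (a : F) (ℓ : ℕ) :
    ((ℓ:F)+1) • (dPow F e (ℓ+1) z * risePow h (1-a) (ℓ+1)) =
      (e * (h + algebraMap F A (1-(a+μ)))) * (dPow F e ℓ z * risePow h (1-a) ℓ)
        - (dPow F e ℓ z * risePow h (1-a) ℓ) * (e * (h + algebraMap F A (1-a))) := by
  set zl := dPow F e ℓ z with hzl
  set R := risePow h (1-a) ℓ with hR
  -- first term
  have hmove : (h + algebraMap F A (1-(a+μ))) * zl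
      = zl * (h + algebraMap F A ((1-a) + (ℓ:F))) := by
    have := weight_move (weight_dPow he hz ℓ) (1-(a+μ))
    have hc : (1-(a+μ)) + (μ + (ℓ:F)) = (1-a) + (ℓ:F) := by ring
    rw [hc] at this
    exact this
  have t1 : (e * (h + algebraMap F A (1-(a+μ)))) * (zl * R)
      = e * zl * risePow h (1-a) (ℓ+1) := by
    rw [mul_assoc, ← mul_assoc (h + algebraMap F A (1-(a+μ))), hmove,
      mul_assoc zl, (commute_risePow h ((1-a)+(ℓ:F)) (1-a) ℓ).eq, ← mul_assoc,
      ← mul_assoc, mul_assoc (e * zl), ← risePow_succ]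
  have t2 : (zl * R) * (e * (h + algebraMap F A (1-a)))
      = zl * e * risePow h (1-a) (ℓ+1) := by
    rw [mul_assoc, ← mul_assoc R, risePow_mul_e he _ ℓ, mul_assoc e,
      ((commute_risePow h (1-a) ((1-a)+1) ℓ).symm).eq, ← risePow_succ_left, ← mul_assoc]
  rw [t1, t2, ← sub_mul, e_dPow ℓ z, smul_mul_assoc]


lemma uRec (he : h * e - e * h = e) (c : F) (j : ℕ) :
    ((j:F)+1) • (PowerSeries.coeff (j+1) (uSer h e c)) =
      -(PowerSeries.coeff j (uSer h e c) * (e * (h + algebraMap F A (1-c)))) := by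
  simp only [uSer, PowerSeries.coeff_mk]
  have key : fallPow h (-c) (j+1) * e^(j+1)
      = fallPow h (-c) j * e^j * (e * (h + algebraMap F A (1-c))) := by
    show (fallPow h (-c) j * (h + algebraMap F A (-c - (j:F)))) * e^(j+1) = _
    rw [mul_assoc, pow_move he (-c - (j:F)) (j+1)]
    have hc : (-c - (j:F)) + ((j+1 : ℕ):F) = 1 - c := by push_cast; ring
    rw [hc, pow_succ, mul_assoc (e^j) e, mul_assoc]
  have hs : ((j:F)+1) * ((-1 : F)^(j+1)/(((j+1).factorial : F)))
      = -((-1:F)^j/(j.factorial : F)) := by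
    have h1 : ((j.factorial : F)) ≠ 0 := Nat.cast_ne_zero.mpr (Nat.factorial_ne_zero j)
    have h2 : ((j:F)+1) ≠ 0 := Nat.cast_add_one_ne_zero j
    rw [Nat.factorial_succ]
    push_cast
    field_simp
    ring
  rw [key, smul_smul, hs, neg_smul, smul_mul_assoc, ← mul_assoc]

lemma recR (he : h * e - e * h = e) {z : A} {μ : F} (hz : h * z - z * h = μ • z)
    (a : F) (n : ℕ) :
    ((n:F)+1) • (PowerSeries.coeff (n+1)
        (uSer h e (a+μ) * PowerSeries.mk (fun ℓ => dPow F e ℓ z * risePow h (1-a) ℓ))) =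
      -(PowerSeries.coeff n
        (uSer h e (a+μ) * PowerSeries.mk (fun ℓ => dPow F e ℓ z * risePow h (1-a) ℓ))
        * (e * (h + algebraMap F A (1-a)))) := by
  set g : ℕ → A := fun j => PowerSeries.coeff j (uSer h e (a+μ)) with hg
  set sfun : ℕ → A := fun ℓ => dPow F e ℓ z * risePow h (1-a) ℓ with hsfun
  set Q : A := e * (h + algebraMap F A (1-(a+μ))) with hQ
  set P : A := e * (h + algebraMap F A (1-a)) with hP
  have fg1 : ∀ i : ℕ, ((i:F)+1) • g (i+1) = -(g i * Q) := fun i => uRec he (a+μ) i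
  have fs1 : ∀ k : ℕ, ((k:F)+1) • sfun (k+1) = Q * sfun k - sfun k * P :=
    fun k => star he hz a k
  rw [PowerSeries.coeff_mul, PowerSeries.coeff_mul,
    Finset.Nat.sum_antidiagonal_eq_sum_range_succ_mk,
    Finset.Nat.sum_antidiagonal_eq_sum_range_succ_mk, Finset.smul_sum]
  simp only [PowerSeries.coeff_mk, ← hg, ← hsfun, ← hP]
  have split : ∀ i ∈ Finset.range (n+2),
      ((n:F)+1) • (g i * sfun (n+1-i))
        = ((i:F) • g i) * sfun (n+1-i) + g i * (((n+1-i : ℕ):F) • sfun (n+1-i)) := by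
    intro i hi
    have hi' : i ≤ n+1 := Nat.lt_succ_iff.mp (Finset.mem_range.mp hi)
    have hcast : ((n:F)+1) = (i:F) + ((n+1-i : ℕ):F) := by
      rw [Nat.cast_sub hi']; push_cast; ring
    rw [hcast, add_smul, smul_mul_assoc, mul_smul_comm]
  rw [Finset.sum_congr rfl split, Finset.sum_add_distrib]
  have T1 : (∑ i ∈ Finset.range (n+2), ((i:F) • g i) * sfun (n+1-i))
      = ∑ i ∈ Finset.range (n+1), -(g i * Q) * sfun (n-i) := by
    rw [Finset.sum_range_succ']
    simp only [Nat.cast_zero, zero_smul, zero_mul, add_zero]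
    refine Finset.sum_congr rfl fun i _ => ?_
    rw [Nat.succ_sub_succ, Nat.cast_add, Nat.cast_one, fg1 i]
  have T2 : (∑ i ∈ Finset.range (n+2), g i * (((n+1-i : ℕ):F) • sfun (n+1-i)))
      = ∑ i ∈ Finset.range (n+1), g i * (Q * sfun (n-i) - sfun (n-i) * P) := by
    rw [Finset.sum_range_succ]
    simp only [Nat.sub_self, Nat.cast_zero, zero_smul, mul_zero, add_zero]
    refine Finset.sum_congr rfl fun i hi => ?_
    have hi' : i ≤ n := Nat.lt_succ_iff.mp (Finset.mem_range.mp hi)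
    have hsub : n+1-i = (n-i)+1 := by omega
    rw [hsub, Nat.cast_add, Nat.cast_one, fs1 (n-i)]
  rw [T1, T2, ← Finset.sum_add_distrib, Finset.sum_mul, ← Finset.sum_neg_distrib]
  refine Finset.sum_congr rfl fun i _ => ?_
  noncomm_ring

end helpers

theorem pow_mul_uSer {F A : Type*} [Field F] [CharZero F] [Ring A] [Algebra F A]
    (h e : A) (he : h * e - e * h = e)
    (y : A) (lam : F) (hy : h * y - y * h = lam • y) (a : F) (s : ℕ) :
    PowerSeries.C (y ^ s) * uSer h e a =
      uSer h e (a + (s : F) * lam) *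
        PowerSeries.mk (fun ℓ => dPow F e ℓ (y ^ s) * risePow h (1 - a) ℓ) := by
  have hz : h * y ^ s - y ^ s * h = ((s:F) * lam) • y ^ s := weight_pow hy s
  apply PowerSeries.ext
  intro n
  induction n with
  | zero =>
    simp [uSer, dPow, fallPow, risePow, PowerSeries.coeff_mul, PowerSeries.coeff_C_mul]
  | succ n ih =>
    have hne : ((n:F)+1) ≠ 0 := Nat.cast_add_one_ne_zero n
    have recL : ((n:F)+1) • PowerSeries.coeff (n+1) (PowerSeries.C (y^s) * uSer h e a)
        = -(PowerSeries.coeff n (PowerSeries.C (y^s) * uSer h e a)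
            * (e * (h + algebraMap F A (1-a)))) := by
      rw [PowerSeries.coeff_C_mul, PowerSeries.coeff_C_mul, ← mul_smul_comm, uRec he a n,
        mul_neg, ← mul_assoc]
    have recR' := recR he hz a n
    have key : ((n:F)+1) • PowerSeries.coeff (n+1) (PowerSeries.C (y^s) * uSer h e a)
        = ((n:F)+1) • PowerSeries.coeff (n+1) (uSer h e (a + (s:F)*lam) *
            PowerSeries.mk (fun ℓ => dPow F e ℓ (y ^ s) * risePow h (1 - a) ℓ)) := by
      rw [recL, recR', ih]
    calc PowerSeries.coeff (n+1) (PowerSeries.C (y^s) * uSer h e a)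
        = ((n:F)+1)⁻¹ • (((n:F)+1) • PowerSeries.coeff (n+1)
            (PowerSeries.C (y^s) * uSer h e a)) := (inv_smul_smul₀ hne _).symm
      _ = ((n:F)+1)⁻¹ • (((n:F)+1) • PowerSeries.coeff (n+1)
            (uSer h e (a + (s:F)*lam) *
              PowerSeries.mk (fun ℓ => dPow F e ℓ (y ^ s) * risePow h (1 - a) ℓ))) := by
          rw [key]
      _ = _ := inv_smul_smul₀ hne _
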